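/- Let m ≥ 6 be an integer and set n = m(m+1)/2. Let H_m = ∏_{r=0}^{m−1} (2r+1)!! be the product of all hook lengths of the staircase partition (m, m−1, …, 2, 1) of n. Then n! / H_m ≥ (n!)^{5/11}; equivalently, (n!)^{6} ≥ H_m^{11}. (By the hook length formula, n!/H_m is the degree χ_m(1) of the staircase irreducible character χ^{(m,m−1,…,1)} of the symmetric group S_n, so this says χ_m(1) ≥ |S_n|^{5/11}.) -/

import Mathlib

open Nat
open scoped Nat

namespace McKayGraphs

set_option maxRecDepth 40000

/-- Recursive version of the hook length product. -/
def Hrec : ℕ → ℕ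
  | 0 => 1
  | m+1 => Hrec m * (2*m+1)‼

lemma Hrec_eq (m : ℕ) : Hrec m = ∏ r ∈ Finset.range m, (2 * r + 1)‼ := by
  induction m with
  | zero => simp [Hrec]
  | succ k ih => rw [Finset.prod_range_succ, ← ih]; rfl

lemma Hrec_pos (m : ℕ) : 0 < Hrec m := by
  induction m with
  | zero => simp [Hrec]
  | succ k ih => exact Nat.mul_pos ih (Nat.doubleFactorial_pos _)

/-- Truncated binomial expansion with three terms. -/
lemma binom3 (t : ℕ) : ∀ m : ℕ,
    2*t^(m+2) + 14*(m+2)*t^(m+1) + 49*(m+2)*(m+1)*t^m ≤ 2*(t+7)^(m+2)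
  | 0 => le_of_eq (by ring)
  | m+1 => by
    have ih := binom3 t m
    have key : (t+7) * (2*t^(m+2)+14*(m+2)*t^(m+1)+49*(m+2)*(m+1)*t^m)
        = 2*t^(m+3)+14*(m+3)*t^(m+2)+49*(m+3)*(m+2)*t^(m+1) + 343*(m+2)*(m+1)*t^m := by
      ring
    calc 2*t^(m+1+2) + 14*(m+1+2)*t^(m+1+1) + 49*(m+1+2)*(m+1+1)*t^(m+1)
        ≤ 2*t^(m+3)+14*(m+3)*t^(m+2)+49*(m+3)*(m+2)*t^(m+1) + 343*(m+2)*(m+1)*t^m := by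
          simp only [show m+1+2 = m+3 from rfl, show m+1+1 = m+2 from rfl]
          omega
      _ = (t+7) * (2*t^(m+2)+14*(m+2)*t^(m+1)+49*(m+2)*(m+1)*t^m) := key.symm
      _ ≤ (t+7) * (2*(t+7)^(m+2)) := Nat.mul_le_mul_left _ ih
      _ = 2*(t+7)^(m+1+2) := by ring

/-- The double factorial bound `8^(m+1) (2m+1)‼ ≤ 2 (7m+5)^(m+1)`. -/
lemma dfact_bound : ∀ m : ℕ, 8^(m+1) * (2*m+1)‼ ≤ 2*(7*m+5)^(m+1)
  | 0 => by decide
  | m+1 => by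
    have ih := dfact_bound m
    have hdf : (2*(m+1)+1)‼ = (2*m+3) * (2*m+1)‼ := by
      have e : 2*(m+1)+1 = (2*m+1)+2 := by ring
      rw [e, Nat.doubleFactorial_add_two]
    set t := 7*m+5 with ht
    have hcoef : 16*(2*m+3)*t ≤ 2*t^2+14*(m+2)*t+49*(m+2)*(m+1) := by
      rw [ht]; nlinarith [sq_nonneg m]
    have hmain : 16*(2*m+3)*t^(m+1) ≤ 2*(t+7)^(m+2) := by
      calc 16*(2*m+3)*t^(m+1) = (16*(2*m+3)*t) * t^m := by ring
        _ ≤ (2*t^2+14*(m+2)*t+49*(m+2)*(m+1)) * t^m := Nat.mul_le_mul_right _ hcoef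
        _ = 2*t^(m+2) + 14*(m+2)*t^(m+1) + 49*(m+2)*(m+1)*t^m := by ring
        _ ≤ 2*(t+7)^(m+2) := binom3 t m
    calc 8^(m+1+1) * (2*(m+1)+1)‼ = (8*(2*m+3)) * (8^(m+1) * (2*m+1)‼) := by
          rw [hdf]; ring
      _ ≤ (8*(2*m+3)) * (2*(7*m+5)^(m+1)) := Nat.mul_le_mul_left _ ih
      _ = 16*(2*m+3)*t^(m+1) := by rw [ht]; ring
      _ ≤ 2*(t+7)^(m+2) := hmain
      _ = 2*(7*(m+1)+5)^(m+1+1) := by rw [ht]; ring_nf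

/-- All base cases `6 ≤ m ≤ 35` by kernel computation. -/
lemma base_cases : ∀ i : ℕ, i < 30 → Hrec (i+6) ^ 11 ≤ (((i+6)*((i+6)+1)/2)!)^6 := by decide

/-- Main numeric inequality. -/
lemma key_ineq : ∀ m : ℕ, 6 ≤ m → Hrec m ^ 11 ≤ ((m*(m+1)/2)!)^6 := by
  intro m hm
  induction m, hm using Nat.le_induction with
  | base => exact base_cases 0 (by norm_num)
  | succ m hm ih =>
    by_cases hle : m + 1 ≤ 35
    · have h := base_cases (m - 5) (by omega)
      have e : m - 5 + 6 = m + 1 := by omega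
      rw [e] at h
      exact h
    · have h35 : 35 ≤ m := by omega
      set n := m*(m+1)/2 with hn
      obtain ⟨k, hk⟩ := Nat.even_mul_succ_self m
      have hnk : n = k := by rw [hn]; omega
      have hn' : (m+1)*((m+1)+1) / 2 = n + (m+1) := by
        have e2 : (m+1)*(m+2) = m*(m+1) + 2*(m+1) := by ring
        have : (m+1)*((m+1)+1) = (m+1)*(m+2) := by ring
        rw [this]; omega
      -- core inequality : ((2m+1)‼)^11 ≤ (n+1)^(6*(m+1))
      have hC : 2*(7*m+5)^11 ≤ 8^11*(n+1)^6 := by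
        have h2n : m*m + m + 2 ≤ 2*(n+1) := by
          have : m*(m+1) = m*m + m := by ring
          omega
        have hA : (7*m+5)^11 ≤ 7^11 * (m+1)^11 := by
          calc (7*m+5)^11 ≤ (7*(m+1))^11 := Nat.pow_le_pow_left (by omega) _
            _ = 7^11 * (m+1)^11 := by rw [mul_pow]
        have hB : m^6*(m+1)^6 ≤ (2*(n+1))^6 := by
          calc m^6*(m+1)^6 = (m*(m+1))^6 := by rw [mul_pow]
            _ ≤ (2*(n+1))^6 := Nat.pow_le_pow_left (by nlinarith) _
        have hnum : 7^11 * (m+1)^5 * 35^5 ≤ 2^26 * m^6 * 35^5 := by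
          have h5 : 35^5*(m+1)^5 ≤ 36^5 * m^5 := by
            calc 35^5*(m+1)^5 = (35*(m+1))^5 := by rw [mul_pow]
              _ ≤ (36*m)^5 := Nat.pow_le_pow_left (by omega) _
              _ = 36^5 * m^5 := by rw [mul_pow]
          calc 7^11 * (m+1)^5 * 35^5 = 7^11 * (35^5*(m+1)^5) := by ring
            _ ≤ 7^11 * (36^5 * m^5) := Nat.mul_le_mul_left _ h5
            _ = (7^11 * 36^5) * m^5 := by ring
            _ ≤ (2^26 * 35^5 * 35) * m^5 := Nat.mul_le_mul_right _ (by norm_num)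
            _ ≤ (2^26 * 35^5 * m) * m^5 := by
                have : 2^26 * 35^5 * 35 ≤ 2^26 * 35^5 * m := Nat.mul_le_mul_left _ h35
                exact Nat.mul_le_mul_right _ this
            _ = 2^26 * m^6 * 35^5 := by ring
        have hnum' : 7^11 * (m+1)^5 ≤ 2^26 * m^6 :=
          Nat.le_of_mul_le_mul_right hnum (by norm_num)
        -- assemble: 2*(7m+5)^11 ≤ 2*7^11*(m+1)^11 ≤ ...
        have step1 : 2^6*(2*(7*m+5)^11) ≤ 2^7*7^11*(m+1)^11 := by
          calc 2^6*(2*(7*m+5)^11) = 2^7*(7*m+5)^11 := by ring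
            _ ≤ 2^7*(7^11*(m+1)^11) := Nat.mul_le_mul_left _ hA
            _ = 2^7*7^11*(m+1)^11 := by ring
        have step2 : 2^7*7^11*(m+1)^11 ≤ 8^11*(m^6*(m+1)^6) := by
          calc 2^7*7^11*(m+1)^11 = (2^7*(7^11*(m+1)^5))*(m+1)^6 := by ring
            _ ≤ (2^7*(2^26*m^6))*(m+1)^6 :=
                Nat.mul_le_mul_right _ (Nat.mul_le_mul_left _ hnum')
            _ = 8^11*(m^6*(m+1)^6) := by ring
        have step3 : 8^11*(m^6*(m+1)^6) ≤ 8^11*(2*(n+1))^6 := Nat.mul_le_mul_left _ hB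
        have : 2^6*(2*(7*m+5)^11) ≤ 2^6*(8^11*(n+1)^6) := by
          calc 2^6*(2*(7*m+5)^11) ≤ 8^11*(2*(n+1))^6 := le_trans step1 (le_trans step2 step3)
            _ = 2^6*(8^11*(n+1)^6) := by ring
        exact Nat.le_of_mul_le_mul_left this (by norm_num)
      have core : ((2*m+1)‼)^11 ≤ (n+1)^(6*(m+1)) := by
        have hD := dfact_bound m
        have h11 : (8^(m+1) * (2*m+1)‼)^11 ≤ (2*(7*m+5)^(m+1))^11 :=
          Nat.pow_le_pow_left hD 11
        have big : (2*(7*m+5)^11)^(m+1) ≤ (8^11*(n+1)^6)^(m+1) :=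
          Nat.pow_le_pow_left hC (m+1)
        have chain : 8^(11*(m+1)) * ((2*m+1)‼)^11 ≤ 8^(11*(m+1)) * (n+1)^(6*(m+1)) := by
          calc 8^(11*(m+1)) * ((2*m+1)‼)^11 = (8^(m+1) * (2*m+1)‼)^11 := by
                rw [mul_pow, ← pow_mul, Nat.mul_comm (m+1) 11]
            _ ≤ (2*(7*m+5)^(m+1))^11 := h11
            _ = 2^11 * (7*m+5)^(11*(m+1)) := by
                rw [mul_pow, ← pow_mul, Nat.mul_comm (m+1) 11]
            _ ≤ 2^(m+1) * (7*m+5)^(11*(m+1)) :=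
                Nat.mul_le_mul_right _ (Nat.pow_le_pow_right (by norm_num) (by omega))
            _ = (2*(7*m+5)^11)^(m+1) := by
                rw [mul_pow, ← pow_mul]
            _ ≤ (8^11*(n+1)^6)^(m+1) := big
            _ = 8^(11*(m+1)) * (n+1)^(6*(m+1)) := by
                rw [mul_pow, ← pow_mul, ← pow_mul]
        exact Nat.le_of_mul_le_mul_left chain (by positivity)
      -- assemble
      have hfac : (n !) * (n+1)^(m+1) ≤ (n + (m+1))! := Nat.factorial_mul_pow_le_factorial
      calc Hrec (m+1) ^ 11 = Hrec m ^ 11 * ((2*m+1)‼)^11 := by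
            show (Hrec m * (2*m+1)‼)^11 = _
            rw [mul_pow]
        _ ≤ ((n !)^6) * ((2*m+1)‼)^11 := Nat.mul_le_mul_right _ ih
        _ ≤ ((n !)^6) * (n+1)^(6*(m+1)) := Nat.mul_le_mul_left _ core
        _ = ((n !) * (n+1)^(m+1))^6 := by rw [mul_pow, ← pow_mul, Nat.mul_comm 6 (m+1)]
        _ ≤ ((n + (m+1))!)^6 := Nat.pow_le_pow_left hfac 6
        _ = (((m+1)*((m+1)+1)/2)!)^6 := by rw [hn']

theorem staircase_degree_lower_bound (m : ℕ) (hm : 6 ≤ m)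
    (n : ℕ) (hn : n = m * (m + 1) / 2)
    (H : ℕ) (hH : H = ∏ r ∈ Finset.range m, (2 * r + 1)‼) :
    ((n ! : ℝ) / H ≥ (n ! : ℝ) ^ ((5 : ℝ) / 11)) ∧ (n ! ^ 6 ≥ H ^ 11) := by
  have hHrec : H = Hrec m := by rw [hH, Hrec_eq]
  have hnat : H ^ 11 ≤ n ! ^ 6 := by
    rw [hHrec, hn]; exact key_ineq m hm
  refine ⟨?_, hnat⟩
  have hHpos : 0 < H := by rw [hHrec]; exact Hrec_pos m
  have ha : (1:ℝ) ≤ (n ! : ℝ) := by exact_mod_cast Nat.one_le_iff_ne_zero.mpr n.factorial_ne_zero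
  have hb : (1:ℝ) ≤ (H : ℝ) := by exact_mod_cast hHpos
  have hkey : (H:ℝ)^(11:ℕ) ≤ (n ! : ℝ)^(6:ℕ) := by exact_mod_cast hnat
  set a : ℝ := (n ! : ℝ) with hadef
  set b : ℝ := (H : ℝ) with hbdef
  have ha0 : (0:ℝ) < a := lt_of_lt_of_le one_pos ha
  have hb0 : (0:ℝ) < b := lt_of_lt_of_le one_pos hb
  have h1 : (a ^ ((5:ℝ)/11)) ^ (11:ℕ) = a ^ (5:ℕ) := by
    rw [← Real.rpow_natCast (a ^ ((5:ℝ)/11)) 11, ← Real.rpow_mul ha0.le]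
    norm_num
  have h2 : a ^ (5:ℕ) ≤ (a / b) ^ (11:ℕ) := by
    rw [div_pow, le_div_iff₀ (by positivity)]
    calc a ^ (5:ℕ) * b ^ (11:ℕ) ≤ a ^ (5:ℕ) * a ^ (6:ℕ) := by
          apply mul_le_mul_of_nonneg_left hkey (by positivity)
      _ = a ^ (11:ℕ) := by ring
  have := le_of_pow_le_pow_left₀ (by norm_num) (by positivity) (h1 ▸ h2 :
      (a ^ ((5:ℝ)/11)) ^ (11:ℕ) ≤ (a / b) ^ (11:ℕ))
  exact this

end McKayGraphs
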